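/- Let (X_0, X_i) be a pair of real random variables with identical continuous marginal density f and continuous joint density f_{0,i}, and let K be a bounded probability kernel with compact support. For b ∈ (0,1] define Z_j(z) = (1/√b)(K((z − X_j)/b) − E[K((z − X_j)/b)]). Then there is a constant C (depending on K, f, f_{0,i} and s, t) such that E|Z_0(s) Z_i(t)| ≤ C·b for all b ∈ (0,1] and all s, t ∈ ℝ in any fixed compact set. -/

import Mathlib

open MeasureTheory
open scoped ProbabilityTheory ENNReal NNReal

lemma kb_compactSupport (K : ℝ → ℝ) {R : ℝ}
    (hRsupp : Function.support K ⊆ Metric.closedBall 0 R) (hR0 : 0 ≤ R)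
    {b s : ℝ} (hb : 0 < b) (hb1 : b ≤ 1) :
    HasCompactSupport (fun x => K ((s - x) / b)) := by
  apply HasCompactSupport.intro (isCompact_closedBall s R)
  intro x hx
  by_contra h
  have hmem : (s - x) / b ∈ Metric.closedBall (0:ℝ) R := hRsupp h
  simp only [Metric.mem_closedBall, Real.dist_eq, sub_zero] at hmem
  rw [abs_div, abs_of_pos hb] at hmem
  have hxs : |x - s| ≤ R * b := by
    rw [abs_sub_comm]
    calc |s - x| = |s - x| / b * b := by field_simp
      _ ≤ R * b := by gcongr
  exact hx (by
    simp only [Metric.mem_closedBall, Real.dist_eq]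
    calc |x - s| ≤ R * b := hxs
      _ ≤ R * 1 := by gcongr
      _ = R := mul_one R)

-- membership in support forces x close to s
lemma kb_mem_ball (K : ℝ → ℝ) {R B : ℝ}
    (hRsupp : Function.support K ⊆ Metric.closedBall 0 R)
    {b s x : ℝ} (hb : 0 < b) (hb1 : b ≤ 1) (hs : |s| + R ≤ B)
    (hx : K ((s - x) / b) ≠ 0) : |x| ≤ B := by
  have hmem : (s - x) / b ∈ Metric.closedBall (0:ℝ) R := hRsupp hx
  simp only [Metric.mem_closedBall, Real.dist_eq, sub_zero] at hmem
  rw [abs_div, abs_of_pos hb] at hmem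
  have hR0 : 0 ≤ R := le_trans (div_nonneg (abs_nonneg _) hb.le) hmem
  have hxs : |s - x| ≤ R := by
    calc |s - x| = |s - x| / b * b := by field_simp
      _ ≤ R * b := by gcongr
      _ ≤ R * 1 := by gcongr
      _ = R := mul_one R
  calc |x| = |s - (s - x)| := by ring_nf
    _ ≤ |s| + |s - x| := abs_sub _ _
    _ ≤ |s| + R := by gcongr
    _ ≤ B := hs

lemma kb_integral (K : ℝ → ℝ) {b : ℝ} (hb : 0 < b) (s : ℝ) :
    ∫ x, K ((s - x) / b) = b * ∫ u, K u := by
  have h1 : (fun x => K ((s - x) / b)) = fun x => (fun y => K (y / (-b))) (x - s) := by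
    ext x
    show K ((s - x) / b) = K ((x - s) / (-b))
    rw [div_neg, ← neg_div, neg_sub]
  rw [h1, integral_sub_right_eq_self (fun y => K (y / (-b))) s,
    Measure.integral_comp_div (fun z => K z) (-b), abs_neg, abs_of_pos hb, smul_eq_mul]

lemma marg_bound {Ω : Type*} [MeasureSpace Ω] [IsProbabilityMeasure (ℙ : Measure Ω)]
    (X : Ω → ℝ) (hX : Measurable X) (f : ℝ → ℝ) (hf : Continuous f)
    (hmap : Measure.map X ℙ = (volume : Measure ℝ).withDensity fun x => ENNReal.ofReal (f x))
    (K : ℝ → ℝ) (hK : Continuous K) (hKnn : ∀ x, 0 ≤ K x) (hK1 : ∫ u, K u = 1)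
    {R B M : ℝ} (hRsupp : Function.support K ⊆ Metric.closedBall 0 R) (hR0 : 0 ≤ R)
    (hM : ∀ x, |x| ≤ B → |f x| ≤ M)
    {b s : ℝ} (hb : 0 < b) (hb1 : b ≤ 1) (hs : |s| + R ≤ B) :
    ∫ ω, K ((s - X ω) / b) ≤ M * b := by
  have hKb_cont : Continuous fun x => K ((s - x) / b) :=
    hK.comp ((continuous_const.sub continuous_id).div_const b)
  have hcpt := kb_compactSupport K hRsupp hR0 hb hb1 (s := s)
  have step1 : (∫ ω, K ((s - X ω) / b)) = ∫ x, ((f x).toNNReal : ℝ) * K ((s - x) / b) := by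
    rw [← integral_map hX.aemeasurable hKb_cont.aestronglyMeasurable, hmap]
    rw [show (fun x => ENNReal.ofReal (f x)) = (fun x => ((f x).toNNReal : ℝ≥0∞)) from rfl]
    rw [integral_withDensity_eq_integral_smul hf.measurable.real_toNNReal]
    simp [NNReal.smul_def, smul_eq_mul]
  rw [step1]
  have hdom : Integrable (fun x => M * K ((s - x) / b)) :=
    ((hKb_cont.integrable_of_hasCompactSupport hcpt).const_mul M)
  have hle : ∀ x, ((f x).toNNReal : ℝ) * K ((s - x) / b) ≤ M * K ((s - x) / b) := by
    intro x
    by_cases hx : K ((s - x) / b) = 0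
    · rw [hx]; simp
    · have hxB := kb_mem_ball K hRsupp hb hb1 hs hx
      have : ((f x).toNNReal : ℝ) ≤ M := by
        rw [Real.coe_toNNReal']
        exact le_trans (max_le (le_abs_self _) (abs_nonneg _)) (hM x hxB)
      exact mul_le_mul_of_nonneg_right this (hKnn _)
  calc (∫ x, ((f x).toNNReal : ℝ) * K ((s - x) / b))
      ≤ ∫ x, M * K ((s - x) / b) := by
        apply integral_mono_of_nonneg
        · filter_upwards with x
          exact mul_nonneg (NNReal.coe_nonneg _) (hKnn _)
        · exact hdom
        · filter_upwards with x; exact hle x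
    _ = M * (b * ∫ u, K u) := by rw [integral_const_mul, kb_integral K hb s]
    _ = M * b := by rw [hK1]; ring

lemma joint_bound {Ω : Type*} [MeasureSpace Ω] [IsProbabilityMeasure (ℙ : Measure Ω)]
    (X0 Xi : Ω → ℝ) (hX0 : Measurable X0) (hXi : Measurable Xi)
    (f0i : ℝ × ℝ → ℝ) (hf0i : Continuous f0i)
    (hjoint : Measure.map (fun ω => (X0 ω, Xi ω)) ℙ =
      (volume : Measure (ℝ × ℝ)).withDensity fun p => ENNReal.ofReal (f0i p))
    (K : ℝ → ℝ) (hK : Continuous K) (hKnn : ∀ x, 0 ≤ K x) (hK1 : ∫ u, K u = 1)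
    {R B M2 : ℝ} (hRsupp : Function.support K ⊆ Metric.closedBall 0 R) (hR0 : 0 ≤ R)
    (hM2 : ∀ p : ℝ × ℝ, |p.1| ≤ B → |p.2| ≤ B → |f0i p| ≤ M2)
    {b s t : ℝ} (hb : 0 < b) (hb1 : b ≤ 1) (hs : |s| + R ≤ B) (ht : |t| + R ≤ B) :
    ∫ ω, K ((s - X0 ω) / b) * K ((t - Xi ω) / b) ≤ M2 * (b * b) := by
  have hKb1_cont : Continuous fun x : ℝ => K ((s - x) / b) :=
    hK.comp ((continuous_const.sub continuous_id).div_const b)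
  have hKb2_cont : Continuous fun x : ℝ => K ((t - x) / b) :=
    hK.comp ((continuous_const.sub continuous_id).div_const b)
  have hg_cont : Continuous fun p : ℝ × ℝ => K ((s - p.1) / b) * K ((t - p.2) / b) :=
    (hK.comp ((continuous_const.sub continuous_fst).div_const b)).mul
      (hK.comp ((continuous_const.sub continuous_snd).div_const b))
  have hint1 : Integrable (fun x : ℝ => K ((s - x) / b)) :=
    hKb1_cont.integrable_of_hasCompactSupport (kb_compactSupport K hRsupp hR0 hb hb1)
  have hint2 : Integrable (fun x : ℝ => K ((t - x) / b)) :=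
    hKb2_cont.integrable_of_hasCompactSupport (kb_compactSupport K hRsupp hR0 hb hb1)
  have step1 : (∫ ω, K ((s - X0 ω) / b) * K ((t - Xi ω) / b))
      = ∫ p : ℝ × ℝ, ((f0i p).toNNReal : ℝ) * (K ((s - p.1) / b) * K ((t - p.2) / b)) := by
    rw [← integral_map (hX0.prodMk hXi).aemeasurable hg_cont.aestronglyMeasurable, hjoint]
    rw [show (fun p => ENNReal.ofReal (f0i p)) = (fun p => ((f0i p).toNNReal : ℝ≥0∞)) from rfl]
    rw [integral_withDensity_eq_integral_smul hf0i.measurable.real_toNNReal]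
    simp [NNReal.smul_def, smul_eq_mul]
  rw [step1]
  have hdom : Integrable (fun p : ℝ × ℝ => M2 * (K ((s - p.1) / b) * K ((t - p.2) / b))) := by
    rw [Measure.volume_eq_prod]
    exact (hint1.mul_prod hint2).const_mul M2
  have hprodval : (∫ p : ℝ × ℝ, K ((s - p.1) / b) * K ((t - p.2) / b)) = b * b := by
    rw [Measure.volume_eq_prod,
      integral_prod_mul (f := fun x => K ((s - x) / b)) (g := fun y => K ((t - y) / b)),
      kb_integral K hb s, kb_integral K hb t, hK1]
    ring
  calc (∫ p : ℝ × ℝ, ((f0i p).toNNReal : ℝ) * (K ((s - p.1) / b) * K ((t - p.2) / b)))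
      ≤ ∫ p : ℝ × ℝ, M2 * (K ((s - p.1) / b) * K ((t - p.2) / b)) := by
        apply integral_mono_of_nonneg
        · filter_upwards with p
          exact mul_nonneg (NNReal.coe_nonneg _) (mul_nonneg (hKnn _) (hKnn _))
        · exact hdom
        · filter_upwards with p
          by_cases h1 : K ((s - p.1) / b) = 0
          · simp [h1]
          by_cases h2 : K ((t - p.2) / b) = 0
          · simp [h2]
          have hp1 := kb_mem_ball K hRsupp hb hb1 hs h1
          have hp2 := kb_mem_ball K hRsupp hb hb1 ht h2
          have : ((f0i p).toNNReal : ℝ) ≤ M2 := by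
            rw [Real.coe_toNNReal']
            exact le_trans (max_le (le_abs_self _) (abs_nonneg _)) (hM2 p hp1 hp2)
          exact mul_le_mul_of_nonneg_right this (mul_nonneg (hKnn _) (hKnn _))
    _ = M2 * (b * b) := by rw [integral_const_mul, hprodval]

theorem cross_moment_O_of_bandwidth
    {Ω : Type*} [MeasureSpace Ω] [IsProbabilityMeasure (ℙ : Measure Ω)]
    (X0 Xi : Ω → ℝ) (hX0 : Measurable X0) (hXi : Measurable Xi)
    (f : ℝ → ℝ) (hf : Continuous f)
    (f0i : ℝ × ℝ → ℝ) (hf0i : Continuous f0i)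
    (hmarg0 : Measure.map X0 ℙ = (volume : Measure ℝ).withDensity fun x => ENNReal.ofReal (f x))
    (hmargi : Measure.map Xi ℙ = (volume : Measure ℝ).withDensity fun x => ENNReal.ofReal (f x))
    (hjoint : Measure.map (fun ω => (X0 ω, Xi ω)) ℙ =
      (volume : Measure (ℝ × ℝ)).withDensity fun p => ENNReal.ofReal (f0i p))
    (K : ℝ → ℝ) (hK : Continuous K) (hKsupp : HasCompactSupport K)
    (hKnn : ∀ x, 0 ≤ K x) (hK1 : ∫ u, K u = 1)
    (S : Set ℝ) (hS : IsCompact S) :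
    ∃ C : ℝ, ∀ b ∈ Set.Ioc (0 : ℝ) 1, ∀ s ∈ S, ∀ t ∈ S,
      (∫ ω, |((1 / Real.sqrt b) * (K ((s - X0 ω) / b) - ∫ ω', K ((s - X0 ω') / b))) *
             ((1 / Real.sqrt b) * (K ((t - Xi ω) / b) - ∫ ω', K ((t - Xi ω') / b)))|) ≤ C * b := by
  -- support radius
  obtain ⟨R0, hR0sub⟩ := hKsupp.isBounded.subset_closedBall (0 : ℝ)
  set R : ℝ := max R0 0 with hRdef
  have hR0 : 0 ≤ R := le_max_right _ _
  have hRsupp : Function.support K ⊆ Metric.closedBall 0 R :=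
    (subset_tsupport K).trans (hR0sub.trans
      (Metric.closedBall_subset_closedBall (le_max_left _ _)))
  -- bound for S
  obtain ⟨A0, hA0⟩ := hS.isBounded.subset_closedBall (0 : ℝ)
  set B : ℝ := max A0 0 + R with hBdef
  have hSB : ∀ s ∈ S, |s| + R ≤ B := by
    intro s hsS
    have : s ∈ Metric.closedBall (0:ℝ) A0 := hA0 hsS
    simp only [Metric.mem_closedBall, Real.dist_eq, sub_zero] at this
    have : |s| ≤ max A0 0 := le_trans this (le_max_left _ _)
    simp only [hBdef]; linarith
  -- bounds for the densities
  obtain ⟨M0, hM0⟩ := (isCompact_closedBall (0:ℝ) B).exists_bound_of_continuousOn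
    hf.continuousOn
  set M : ℝ := max M0 0 with hMdef
  have hMnn : 0 ≤ M := le_max_right _ _
  have hM : ∀ x : ℝ, |x| ≤ B → |f x| ≤ M := by
    intro x hx
    have hxmem : x ∈ Metric.closedBall (0:ℝ) B := by
      simpa [Metric.mem_closedBall, Real.dist_eq] using hx
    exact le_trans (hM0 x hxmem) (le_max_left _ _)
  obtain ⟨M20, hM20⟩ := (isCompact_closedBall (0:ℝ×ℝ) B).exists_bound_of_continuousOn
    hf0i.continuousOn
  set M2 : ℝ := max M20 0 with hM2def
  have hM2 : ∀ p : ℝ × ℝ, |p.1| ≤ B → |p.2| ≤ B → |f0i p| ≤ M2 := by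
    intro p h1 h2
    have hpmem : p ∈ Metric.closedBall (0:ℝ×ℝ) B := by
      simp only [Metric.mem_closedBall, Prod.dist_eq, Real.dist_eq, sub_zero]
      exact max_le (by simpa using h1) (by simpa using h2)
    exact le_trans (hM20 p hpmem) (le_max_left _ _)
  -- bound for K
  obtain ⟨MK, hMK⟩ := hKsupp.exists_bound_of_continuous hK
  have hMKnn : 0 ≤ MK := le_trans (norm_nonneg (K 0)) (hMK 0)
  refine ⟨M2 + 3 * M ^ 2, ?_⟩
  rintro b ⟨hb0, hb1⟩ s hsS t htS
  set a : ℝ := ∫ ω', K ((s - X0 ω') / b) with hadef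
  set c : ℝ := ∫ ω', K ((t - Xi ω') / b) with hcdef
  have ha0 : 0 ≤ a := integral_nonneg fun ω => hKnn _
  have hc0 : 0 ≤ c := integral_nonneg fun ω => hKnn _
  have haM : a ≤ M * b :=
    marg_bound X0 hX0 f hf hmarg0 K hK hKnn hK1 hRsupp hR0 hM hb0 hb1 (hSB s hsS)
  have hcM : c ≤ M * b :=
    marg_bound Xi hXi f hf hmargi K hK hKnn hK1 hRsupp hR0 hM hb0 hb1 (hSB t htS)
  -- integrability over Ω
  have hmeas0 : Measurable fun ω => K ((s - X0 ω) / b) :=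
    hK.measurable.comp ((measurable_const.sub hX0).div_const b)
  have hmeas1 : Measurable fun ω => K ((t - Xi ω) / b) :=
    hK.measurable.comp ((measurable_const.sub hXi).div_const b)
  have hint0 : Integrable (fun ω => K ((s - X0 ω) / b)) ℙ :=
    ⟨hmeas0.aestronglyMeasurable, HasFiniteIntegral.of_bounded
      (C := MK) (Filter.Eventually.of_forall fun ω => hMK _)⟩
  have hint1 : Integrable (fun ω => K ((t - Xi ω) / b)) ℙ :=
    ⟨hmeas1.aestronglyMeasurable, HasFiniteIntegral.of_bounded
      (C := MK) (Filter.Eventually.of_forall fun ω => hMK _)⟩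
  have hint01 : Integrable (fun ω => K ((s - X0 ω) / b) * K ((t - Xi ω) / b)) ℙ :=
    ⟨(hmeas0.mul hmeas1).aestronglyMeasurable, HasFiniteIntegral.of_bounded
      (C := MK * MK) (Filter.Eventually.of_forall fun ω => by
        rw [norm_mul]
        exact mul_le_mul (hMK _) (hMK _) (norm_nonneg _) hMKnn)⟩
  have hI01 : (∫ ω, K ((s - X0 ω) / b) * K ((t - Xi ω) / b)) ≤ M2 * (b * b) :=
    joint_bound X0 Xi hX0 hXi f0i hf0i hjoint K hK hKnn hK1 hRsupp hR0 hM2 hb0 hb1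
      (hSB s hsS) (hSB t htS)
  have hI010 : 0 ≤ ∫ ω, K ((s - X0 ω) / b) * K ((t - Xi ω) / b) :=
    integral_nonneg fun ω => mul_nonneg (hKnn _) (hKnn _)
  have hbinv : (0:ℝ) ≤ 1 / b := by positivity
  have hbb : (1:ℝ) / b = 1 / Real.sqrt b * (1 / Real.sqrt b) := by
    rw [div_mul_div_comm, one_mul, Real.mul_self_sqrt hb0.le]
  -- pointwise bound
  have hpt : ∀ ω, |((1 / Real.sqrt b) * (K ((s - X0 ω) / b) - a)) *
      ((1 / Real.sqrt b) * (K ((t - Xi ω) / b) - c))|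
      ≤ 1 / b * (K ((s - X0 ω) / b) * K ((t - Xi ω) / b)) + 1 / b * c * K ((s - X0 ω) / b)
        + 1 / b * a * K ((t - Xi ω) / b) + 1 / b * (a * c) := by
    intro ω
    have hsb : (0:ℝ) ≤ 1 / Real.sqrt b := by positivity
    have habs0 : |K ((s - X0 ω) / b) - a| ≤ K ((s - X0 ω) / b) + a := by
      calc |K ((s - X0 ω) / b) - a| ≤ |K ((s - X0 ω) / b)| + |a| := abs_sub _ _
        _ = K ((s - X0 ω) / b) + a := by rw [abs_of_nonneg (hKnn _), abs_of_nonneg ha0]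
    have habs1 : |K ((t - Xi ω) / b) - c| ≤ K ((t - Xi ω) / b) + c := by
      calc |K ((t - Xi ω) / b) - c| ≤ |K ((t - Xi ω) / b)| + |c| := abs_sub _ _
        _ = K ((t - Xi ω) / b) + c := by rw [abs_of_nonneg (hKnn _), abs_of_nonneg hc0]
    calc |((1 / Real.sqrt b) * (K ((s - X0 ω) / b) - a)) *
        ((1 / Real.sqrt b) * (K ((t - Xi ω) / b) - c))|
        = 1 / b * (|K ((s - X0 ω) / b) - a| * |K ((t - Xi ω) / b) - c|) := by
          rw [abs_mul, abs_mul, abs_mul, abs_of_nonneg hsb, hbb]; ring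
      _ ≤ 1 / b * ((K ((s - X0 ω) / b) + a) * (K ((t - Xi ω) / b) + c)) := by
          apply mul_le_mul_of_nonneg_left _ hbinv
          exact mul_le_mul habs0 habs1 (abs_nonneg _)
            (add_nonneg (hKnn _) ha0)
      _ = _ := by ring
  -- integrate
  calc (∫ ω, |((1 / Real.sqrt b) * (K ((s - X0 ω) / b) - a)) *
        ((1 / Real.sqrt b) * (K ((t - Xi ω) / b) - c))|)
      ≤ ∫ ω, (1 / b * (K ((s - X0 ω) / b) * K ((t - Xi ω) / b))
          + 1 / b * c * K ((s - X0 ω) / b) + 1 / b * a * K ((t - Xi ω) / b)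
          + 1 / b * (a * c)) := by
        apply integral_mono_of_nonneg
        · filter_upwards with ω; exact abs_nonneg _
        · exact (((hint01.const_mul _).add (hint0.const_mul _)).add
            (hint1.const_mul _)).add (integrable_const _)
        · filter_upwards with ω; exact hpt ω
    _ = 1 / b * (∫ ω, K ((s - X0 ω) / b) * K ((t - Xi ω) / b))
        + 1 / b * c * a + 1 / b * a * c + 1 / b * (a * c) := by
        have IA : Integrable (fun ω => 1 / b * (K ((s - X0 ω) / b) * K ((t - Xi ω) / b))) ℙ :=
          hint01.const_mul _
        have IB : Integrable (fun ω => 1 / b * c * K ((s - X0 ω) / b)) ℙ := hint0.const_mul _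
        have IC : Integrable (fun ω => 1 / b * a * K ((t - Xi ω) / b)) ℙ := hint1.const_mul _
        have IAB : Integrable (fun ω => 1 / b * (K ((s - X0 ω) / b) * K ((t - Xi ω) / b))
            + 1 / b * c * K ((s - X0 ω) / b)) ℙ := IA.add IB
        have IABC : Integrable (fun ω => 1 / b * (K ((s - X0 ω) / b) * K ((t - Xi ω) / b))
            + 1 / b * c * K ((s - X0 ω) / b) + 1 / b * a * K ((t - Xi ω) / b)) ℙ := IAB.add IC
        rw [integral_add IABC (integrable_const _), integral_add IAB IC, integral_add IA IB,
          integral_const_mul, integral_const_mul, integral_const_mul, integral_const]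
        simp [measure_univ, ← hadef, ← hcdef]
    _ = 1 / b * ((∫ ω, K ((s - X0 ω) / b) * K ((t - Xi ω) / b)) + 3 * (a * c)) := by ring
    _ ≤ 1 / b * ((M2 * (b * b)) + 3 * ((M * b) * (M * b))) := by
        gcongr
    _ = (M2 + 3 * M ^ 2) * b := by field_simp
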